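/- arXiv:2211.10659 — 3 statements merged into one kernel-verified Lean document; each statement's English description precedes it below -/
import Mathlib

section
/- Let μ > 0, λ ∈ ℝ, N ≥ 5, 2** = 2N/(N−4), S > 0 the best Sobolev constant with ‖u‖²_{2**} ≤ S^{-1}‖Δu‖²₂ for u ∈ H₀²(Ω). Then for every u ∈ H₀²(Ω), −(λ/2)‖u‖²₂ + (μ/2)‖u‖²₂ − (μ/2)∫_Ω u² ln u² dx ≥ −(μ/(2**−2)) e^{−λ/μ−1+2**λ/(2μ)} S^{−2**/2} ‖Δu‖₂^{2**}. -/
open MeasureTheory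

/-- `log t ≤ t^σ / (σ e)` for `t > 0`, `σ > 0`. -/
lemma log_le_rpow_aux {t σ : ℝ} (ht : 0 < t) (hσ : 0 < σ) :
    Real.log t ≤ t ^ σ / (σ * Real.exp 1) := by
  have h1 : Real.log (t ^ σ / Real.exp 1) ≤ t ^ σ / Real.exp 1 - 1 :=
    Real.log_le_sub_one_of_pos (by positivity)
  have h2 : Real.log (t ^ σ / Real.exp 1) = σ * Real.log t - 1 := by
    rw [Real.log_div (by positivity) (Real.exp_ne_zero 1), Real.log_rpow ht, Real.log_exp]
  rw [h2] at h1
  have he : 0 < Real.exp 1 := Real.exp_pos 1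
  have h3 : σ * Real.log t * Real.exp 1 ≤ t ^ σ := by
    have h4 : σ * Real.log t ≤ t ^ σ / Real.exp 1 := by linarith
    have := mul_le_mul_of_nonneg_right h4 he.le
    rwa [div_mul_cancel₀ _ he.ne'] at this
  rw [le_div_iff₀ (by positivity)]
  nlinarith

/-- pointwise: `a log a ≤ exp (c σ - 1)/σ * a^(1+σ) - c a` for `a ≥ 0`. -/
lemma ptwise {σ : ℝ} (hσ : 0 < σ) (c : ℝ) {a : ℝ} (ha : 0 ≤ a) :
    a * Real.log a ≤ Real.exp (c * σ - 1) / σ * a ^ (1 + σ) - c * a := by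
  rcases ha.eq_or_lt with h | h
  · rw [← h, Real.zero_rpow (by positivity)]
    simp
  · have ht : 0 < Real.exp c * a := by positivity
    have hlog : Real.log a ≤ (Real.exp c * a) ^ σ / (σ * Real.exp 1) - c := by
      have := log_le_rpow_aux ht hσ
      rw [Real.log_mul (Real.exp_ne_zero c) h.ne', Real.log_exp] at this
      linarith
    have hmul : a * Real.log a ≤ a * ((Real.exp c * a) ^ σ / (σ * Real.exp 1) - c) :=
      mul_le_mul_of_nonneg_left hlog h.le
    refine hmul.trans_eq ?_
    rw [Real.mul_rpow (Real.exp_pos c).le h.le, ← Real.exp_mul,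
      Real.rpow_add h, Real.rpow_one, Real.exp_sub]
    field_simp

theorem stmt7 {α : Type*} [MeasurableSpace α] (ν : Measure α) {N : ℕ} (hN : 5 ≤ N)
    (lam mu S K p : ℝ) (hmu : 0 < mu) (hS : 0 < S) (hK : 0 ≤ K)
    (hp : p = 2 * (N : ℝ) / ((N : ℝ) - 4)) (u : α → ℝ)
    (hu2 : Integrable (fun x => u x ^ 2) ν)
    (hulog : Integrable (fun x => u x ^ 2 * Real.log (u x ^ 2)) ν)
    (hup : Integrable (fun x => |u x| ^ p) ν)
    (sobolev : (∫ x, |u x| ^ p ∂ν) ^ (2 / p) ≤ S⁻¹ * K ^ 2) :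
    -(lam / 2) * (∫ x, u x ^ 2 ∂ν) + mu / 2 * (∫ x, u x ^ 2 ∂ν)
        - mu / 2 * (∫ x, u x ^ 2 * Real.log (u x ^ 2) ∂ν)
      ≥ -(mu / (p - 2)) * Real.exp (-lam / mu - 1 + p * lam / (2 * mu))
          * S ^ (-(p / 2)) * K ^ p := by
  have hN5 : (5:ℝ) ≤ (N:ℝ) := by exact_mod_cast hN
  have hN4 : (0:ℝ) < (N:ℝ) - 4 := by linarith
  have hp2 : 2 < p := by
    rw [hp, lt_div_iff₀ hN4]; linarith
  have hσ : 0 < (p - 2) / 2 := by linarith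
  set σ : ℝ := (p - 2) / 2 with hσdef
  set c : ℝ := lam / mu with hcdef
  set A := ∫ x, u x ^ 2 ∂ν with hA
  set L := ∫ x, u x ^ 2 * Real.log (u x ^ 2) ∂ν with hL
  set P := ∫ x, |u x| ^ p ∂ν with hP
  set C := Real.exp (c * σ - 1) / σ with hC
  set E := Real.exp (-lam / mu - 1 + p * lam / (2 * mu)) with hE
  have hCpos : 0 < C := by positivity
  have hApos : 0 ≤ A := integral_nonneg fun x => sq_nonneg _
  have hPpos : 0 ≤ P := integral_nonneg fun x => Real.rpow_nonneg (abs_nonneg _) p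
  -- pointwise bound
  have hpt : ∀ x, u x ^ 2 * Real.log (u x ^ 2) ≤ C * |u x| ^ p - c * u x ^ 2 := by
    intro x
    have h1 := ptwise hσ c (sq_nonneg (u x))
    have hpow : (u x ^ 2 : ℝ) ^ ((1:ℝ) + σ) = |u x| ^ p := by
      have h2 : (u x ^ 2 : ℝ) = |u x| ^ (2:ℝ) := by
        rw [show ((2:ℝ) = ((2:ℕ):ℝ)) by norm_num, Real.rpow_natCast, sq_abs]
      rw [h2, ← Real.rpow_mul (abs_nonneg _)]
      congr 1
      rw [hσdef]; ring
    rw [hpow] at h1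
    exact h1
  have hInt : Integrable (fun x => C * |u x| ^ p - c * u x ^ 2) ν :=
    (hup.const_mul C).sub (hu2.const_mul c)
  have hLle : L ≤ C * P - c * A := by
    have h := integral_mono hulog hInt hpt
    rwa [integral_sub (hup.const_mul C) (hu2.const_mul c),
      integral_const_mul, integral_const_mul] at h
  -- Sobolev consequence
  have hPQ : P ≤ S ^ (-(p / 2)) * K ^ p := by
    have hp0 : (0:ℝ) < p := by linarith
    have h1 : P = (P ^ ((2:ℝ) / p)) ^ (p / 2) := by
      rw [← Real.rpow_mul hPpos]
      rw [show (2:ℝ) / p * (p / 2) = 1 by field_simp, Real.rpow_one]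
    have h2 : (P ^ ((2:ℝ) / p)) ^ (p / 2) ≤ (S⁻¹ * K ^ 2) ^ (p / 2) :=
      Real.rpow_le_rpow (Real.rpow_nonneg hPpos _) sobolev (by positivity)
    have h3 : ((S⁻¹ * K ^ 2 : ℝ)) ^ (p / 2) = S ^ (-(p / 2)) * K ^ p := by
      rw [Real.mul_rpow (inv_nonneg.2 hS.le) (sq_nonneg K),
        Real.inv_rpow hS.le, ← Real.rpow_neg hS.le]
      congr 1
      rw [show (K ^ 2 : ℝ) = |K| ^ (2:ℝ) by
        rw [show ((2:ℝ) = ((2:ℕ):ℝ)) by norm_num, Real.rpow_natCast, sq_abs],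
        ← Real.rpow_mul (abs_nonneg K), abs_of_nonneg hK,
        show (2:ℝ) * (p / 2) = p by ring]
    calc P = (P ^ ((2:ℝ) / p)) ^ (p / 2) := h1
      _ ≤ (S⁻¹ * K ^ 2) ^ (p / 2) := h2
      _ = S ^ (-(p / 2)) * K ^ p := h3
  -- combine
  have hc : mu / 2 * c = lam / 2 := by
    rw [hcdef]; field_simp
  have step1 : mu / 2 * L ≤ mu / 2 * C * P - lam / 2 * A := by
    calc mu / 2 * L ≤ mu / 2 * (C * P - c * A) :=
          mul_le_mul_of_nonneg_left hLle (by positivity)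
      _ = mu / 2 * C * P - (mu / 2 * c) * A := by ring
      _ = mu / 2 * C * P - lam / 2 * A := by rw [hc]
  have step2 : mu / 2 * C * P ≤ mu / 2 * C * (S ^ (-(p / 2)) * K ^ p) :=
    mul_le_mul_of_nonneg_left hPQ (by positivity)
  have hCE : mu / 2 * C = mu / (p - 2) * E := by
    rw [hC, hE, hσdef]
    rw [show lam / mu * ((p - 2) / 2) - 1 = -lam / mu - 1 + p * lam / (2 * mu) by
      field_simp; ring]
    rw [div_div_eq_mul_div]
    have h22 : p - 2 ≠ 0 := by linarith
    field_simp
  have step3 : mu / 2 * C * (S ^ (-(p / 2)) * K ^ p)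
      = mu / (p - 2) * E * S ^ (-(p / 2)) * K ^ p := by
    rw [hCE]; ring
  have h4 : 0 ≤ mu / 2 * A := by positivity
  linarith
end

section
/- Let N ≥ 5, C_N = [N(N−4)(N²−4)]^{(N−4)/8}, and for ε > 0 define U_ε(x) = C_N ε^{(N−4)/2} / (ε² + |x|²)^{(N−4)/2} on ℝ^N. Then U_ε satisfies Δ²U_ε = U_ε^{(N+4)/(N−4)} on ℝ^N. -/
open Real EuclideanSpace


/-- The Laplacian of a real-valued function on `ℝ^N`, as the sum of the second partial
derivatives in the coordinate directions. -/
noncomputable def lap {N : ℕ} (f : EuclideanSpace ℝ (Fin N) → ℝ)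
    (x : EuclideanSpace ℝ (Fin N)) : ℝ :=
  ∑ i : Fin N,
    fderiv ℝ (fun y => fderiv ℝ f y (EuclideanSpace.single i 1)) x (EuclideanSpace.single i 1)

/-- The Talenti function `U_ε(x) = C_N ε^{(N-4)/2} / (ε² + |x|²)^{(N-4)/2}` with
`C_N = [N(N-4)(N²-4)]^{(N-4)/8}`. -/
noncomputable def Ufun (N : ℕ) (ε : ℝ) (x : EuclideanSpace ℝ (Fin N)) : ℝ :=
  ((N : ℝ) * ((N : ℝ) - 4) * ((N : ℝ) ^ 2 - 4)) ^ (((N : ℝ) - 4) / 8)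
    * ε ^ (((N : ℝ) - 4) / 2) / (ε ^ 2 + ‖x‖ ^ 2) ^ (((N : ℝ) - 4) / 2)

lemma hasFDerivAt_spow {N : ℕ} (ε c r : ℝ) (hε : 0 < ε) (y : EuclideanSpace ℝ (Fin N)) :
    HasFDerivAt (fun x : EuclideanSpace ℝ (Fin N) => c * (ε^2 + ‖x‖^2) ^ r)
      ((c * r * (ε^2 + ‖y‖^2) ^ (r-1) * 2) • innerSL ℝ y) y := by
  have hs : (0:ℝ) < ε^2 + ‖y‖^2 := by positivity
  have h1 : HasFDerivAt (fun x : EuclideanSpace ℝ (Fin N) => ε^2 + ‖x‖^2)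
      (2 • innerSL ℝ y) y := by
    simpa using ((hasFDerivAt_id y).norm_sq).const_add (ε^2)
  have h2 : HasDerivAt (fun t : ℝ => t ^ r) (r * (ε^2+‖y‖^2) ^ (r-1)) (ε^2+‖y‖^2) :=
    Real.hasDerivAt_rpow_const (Or.inl hs.ne')
  have h3 := (h2.comp_hasFDerivAt y h1).const_mul c
  refine h3.congr_fderiv ?_
  ext v
  simp [smul_smul]
  ring

lemma fderiv_spow_apply {N : ℕ} (ε c r : ℝ) (hε : 0 < ε) (y : EuclideanSpace ℝ (Fin N)) (i : Fin N) :
    fderiv ℝ (fun x : EuclideanSpace ℝ (Fin N) => c * (ε^2+‖x‖^2)^r) y (EuclideanSpace.single i 1)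
      = 2*c*r * ((ε^2+‖y‖^2)^(r-1) * y i) := by
  rw [(hasFDerivAt_spow ε c r hε y).fderiv]
  simp [EuclideanSpace.inner_single_right, real_inner_comm]
  ring

lemma fderiv_G_apply {N : ℕ} (ε c r : ℝ) (hε : 0 < ε) (i : Fin N) (x : EuclideanSpace ℝ (Fin N)) :
    fderiv ℝ (fun y : EuclideanSpace ℝ (Fin N) => 2*c*r * ((ε^2+‖y‖^2)^(r-1) * y i)) x
        (EuclideanSpace.single i 1)
      = 2*c*r * ((ε^2+‖x‖^2)^(r-1) + 2*(r-1)*(ε^2+‖x‖^2)^(r-2) * (x i)^2) := by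
  have hA : HasFDerivAt (fun y : EuclideanSpace ℝ (Fin N) => 1 * (ε^2+‖y‖^2)^(r-1))
      ((1 * (r-1) * (ε^2+‖x‖^2)^((r-1)-1) * 2) • innerSL ℝ x) x :=
    hasFDerivAt_spow ε 1 (r-1) hε x
  have hB : HasFDerivAt (fun y : EuclideanSpace ℝ (Fin N) => y i)
      (EuclideanSpace.proj i (𝕜 := ℝ)) x := (EuclideanSpace.proj i (𝕜 := ℝ)).hasFDerivAt
  have h : (fun y : EuclideanSpace ℝ (Fin N) => 2*c*r * ((ε^2+‖y‖^2)^(r-1) * y i))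
      = (fun y : EuclideanSpace ℝ (Fin N) => (2*c*r) * ((1 * (ε^2+‖y‖^2)^(r-1)) * y i)) := by
    funext y; ring
  rw [h, ((hA.fun_mul hB).const_mul (2*c*r)).fderiv]
  have h1 : (r-1)-1 = r-2 := by ring
  simp [EuclideanSpace.inner_single_right, h1]
  ring

lemma differentiableAt_G {N : ℕ} (ε c r : ℝ) (hε : 0 < ε) (i : Fin N) (x : EuclideanSpace ℝ (Fin N)) :
    DifferentiableAt ℝ (fun y : EuclideanSpace ℝ (Fin N) => 2*c*r * ((ε^2+‖y‖^2)^(r-1) * y i)) x := by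
  have hA : HasFDerivAt (fun y : EuclideanSpace ℝ (Fin N) => 1 * (ε^2+‖y‖^2)^(r-1))
      ((1 * (r-1) * (ε^2+‖x‖^2)^((r-1)-1) * 2) • innerSL ℝ x) x :=
    hasFDerivAt_spow ε 1 (r-1) hε x
  have hB : HasFDerivAt (fun y : EuclideanSpace ℝ (Fin N) => y i)
      (EuclideanSpace.proj i (𝕜 := ℝ)) x := (EuclideanSpace.proj i (𝕜 := ℝ)).hasFDerivAt
  have h : (fun y : EuclideanSpace ℝ (Fin N) => 2*c*r * ((ε^2+‖y‖^2)^(r-1) * y i))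
      = (fun y : EuclideanSpace ℝ (Fin N) => (2*c*r) * ((1 * (ε^2+‖y‖^2)^(r-1)) * y i)) := by
    funext y; ring
  rw [h]
  exact ((hA.mul hB).const_mul (2*c*r)).differentiableAt

lemma lap_two {N : ℕ} (ε c1 r1 c2 r2 : ℝ) (hε : 0 < ε) (x : EuclideanSpace ℝ (Fin N)) :
    lap (fun y => c1 * (ε^2+‖y‖^2)^r1 + c2 * (ε^2+‖y‖^2)^r2) x
      = ((c1*r1*(2*N+4*r1-4)) * (ε^2+‖x‖^2)^(r1-1) + (-4*c1*r1*(r1-1)*ε^2) * (ε^2+‖x‖^2)^(r1-2))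
      + ((c2*r2*(2*N+4*r2-4)) * (ε^2+‖x‖^2)^(r2-1) + (-4*c2*r2*(r2-1)*ε^2) * (ε^2+‖x‖^2)^(r2-2)) := by
  have hs : (0:ℝ) < ε^2 + ‖x‖^2 := by positivity
  have hstep : ∀ i : Fin N, (fun y : EuclideanSpace ℝ (Fin N) =>
      fderiv ℝ (fun z => c1 * (ε^2+‖z‖^2)^r1 + c2 * (ε^2+‖z‖^2)^r2) y (EuclideanSpace.single i 1))
      = (fun y : EuclideanSpace ℝ (Fin N) =>
          2*c1*r1 * ((ε^2+‖y‖^2)^(r1-1) * y i) + 2*c2*r2 * ((ε^2+‖y‖^2)^(r2-1) * y i)) := by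
    intro i
    funext y
    rw [fderiv_fun_add (hasFDerivAt_spow ε c1 r1 hε y).differentiableAt
      (hasFDerivAt_spow ε c2 r2 hε y).differentiableAt]
    rw [ContinuousLinearMap.add_apply, fderiv_spow_apply ε c1 r1 hε y i,
      fderiv_spow_apply ε c2 r2 hε y i]
  have hlap : lap (fun y => c1 * (ε^2+‖y‖^2)^r1 + c2 * (ε^2+‖y‖^2)^r2) x
      = ∑ i : Fin N, (2*c1*r1 * ((ε^2+‖x‖^2)^(r1-1) + 2*(r1-1)*(ε^2+‖x‖^2)^(r1-2) * (x i)^2)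
        + 2*c2*r2 * ((ε^2+‖x‖^2)^(r2-1) + 2*(r2-1)*(ε^2+‖x‖^2)^(r2-2) * (x i)^2)) := by
    unfold lap
    refine Finset.sum_congr rfl fun i _ => ?_
    rw [hstep i]
    rw [fderiv_fun_add (differentiableAt_G ε c1 r1 hε i x) (differentiableAt_G ε c2 r2 hε i x),
      ContinuousLinearMap.add_apply, fderiv_G_apply ε c1 r1 hε i x, fderiv_G_apply ε c2 r2 hε i x]
  rw [hlap]
  have hnorm : ∑ i : Fin N, (x i)^2 = ‖x‖^2 := by
    rw [PiLp.norm_sq_eq_of_L2]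
    exact Finset.sum_congr rfl fun i _ => by rw [Real.norm_eq_abs, sq_abs]
  have key : ∀ (c r : ℝ), ∑ i : Fin N,
      2*c*r * ((ε^2+‖x‖^2)^(r-1) + 2*(r-1)*(ε^2+‖x‖^2)^(r-2) * (x i)^2)
      = (c*r*(2*N+4*r-4)) * (ε^2+‖x‖^2)^(r-1) + (-4*c*r*(r-1)*ε^2) * (ε^2+‖x‖^2)^(r-2) := by
    intro c r
    have hpow : (ε^2+‖x‖^2)^(r-1) = (ε^2+‖x‖^2)^(r-2) * (ε^2+‖x‖^2) := by
      rw [show r-1 = (r-2)+1 by ring, Real.rpow_add hs, Real.rpow_one]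
    simp only [mul_add, Finset.sum_add_distrib, Finset.sum_const, Finset.card_univ,
      Fintype.card_fin, nsmul_eq_mul, mul_assoc, ← Finset.mul_sum, hnorm]
    rw [hpow]
    ring
  rw [Finset.sum_add_distrib, key c1 r1, key c2 r2]

theorem stmt15 {N : ℕ} (hN : 5 ≤ N) (ε : ℝ) (hε : 0 < ε) :
    ∀ x : EuclideanSpace ℝ (Fin N),
      lap (lap (Ufun N ε)) x = Ufun N ε x ^ (((N : ℝ) + 4) / ((N : ℝ) - 4)) := by
  intro x
  have hN5 : (5:ℝ) ≤ (N:ℝ) := by exact_mod_cast hN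
  set e : ℝ := ((N:ℝ)-4)/2 with he
  have hNe : (N:ℝ) = 2*e+4 := by rw [he]; ring
  have he0 : 0 < e := by rw [he]; linarith
  set M : ℝ := (N:ℝ) * ((N:ℝ)-4) * ((N:ℝ)^2-4) with hM
  have hM0 : 0 < M := by
    rw [hM]
    have h1 : (0:ℝ) < N := by linarith
    have h2 : (0:ℝ) < (N:ℝ)-4 := by linarith
    have h3 : (0:ℝ) < (N:ℝ)^2-4 := by nlinarith
    exact mul_pos (mul_pos h1 h2) h3
  have hMe : M = 16*e*(e+1)*(e+2)*(e+3) := by rw [hM, hNe]; ring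
  set K : ℝ := M ^ (e/4) * ε ^ e with hK
  have hK0 : 0 < K := mul_pos (Real.rpow_pos_of_pos hM0 _) (Real.rpow_pos_of_pos hε _)
  have hs : (0:ℝ) < ε^2 + ‖x‖^2 := by positivity
  have h0 : Ufun N ε = fun y : EuclideanSpace ℝ (Fin N) =>
      K * (ε^2+‖y‖^2)^(-e) + 0 * (ε^2+‖y‖^2)^(0:ℝ) := by
    funext y
    have hsy : (0:ℝ) < ε^2 + ‖y‖^2 := by positivity
    unfold Ufun
    rw [show ((N:ℝ)-4)/8 = e/4 by rw [he]; ring,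
      show ((N:ℝ)-4)/2 = e from he.symm, ← hM, ← hK, Real.rpow_neg hsy.le]
    ring
  have h1 : lap (Ufun N ε) = fun y : EuclideanSpace ℝ (Fin N) =>
      (-4*e*K) * (ε^2+‖y‖^2)^(-e-1) + (-4*(e+1)*e*ε^2*K) * (ε^2+‖y‖^2)^(-e-2) := by
    funext y
    rw [h0, lap_two ε K (-e) 0 0 hε y]
    linear_combination (-2*e*K*(ε^2+‖y‖^2)^(-e-1)) * hNe
  have hL : lap (lap (Ufun N ε)) x
      = (16*e*(e+1)*(e+2)*(e+3)*ε^4*K) * (ε^2+‖x‖^2)^(-e-4) := by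
    rw [h1, lap_two ε (-4*e*K) (-e-1) (-4*(e+1)*e*ε^2*K) (-e-2) hε x]
    rw [show (-e-1-1:ℝ) = -e-2 by ring, show (-e-1-2:ℝ) = -e-3 by ring,
      show (-e-2-1:ℝ) = -e-3 by ring, show (-e-2-2:ℝ) = -e-4 by ring]
    linear_combination (8*e*(e+1)*K*(ε^2+‖x‖^2)^(-e-2)
      + 8*e*(e+1)*(e+2)*ε^2*K*(ε^2+‖x‖^2)^(-e-3)) * hNe
  have hε4 : ε ^ (4:ℝ) = ε^4 := by
    rw [show (4:ℝ) = ((4:ℕ):ℝ) by norm_num, Real.rpow_natCast]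
  have hR : Ufun N ε x ^ (((N:ℝ)+4)/((N:ℝ)-4))
      = (16*e*(e+1)*(e+2)*(e+3)*ε^4*K) * (ε^2+‖x‖^2)^(-e-4) := by
    have hUx : Ufun N ε x = K * (ε^2+‖x‖^2)^(-e) := by rw [h0]; ring
    rw [hUx]
    rw [Real.mul_rpow hK0.le (Real.rpow_pos_of_pos hs _).le]
    have he0' : e ≠ 0 := ne_of_gt he0
    have hp1 : (-e) * (((N:ℝ)+4)/((N:ℝ)-4)) = -e-4 := by
      rw [hNe, show (2*e+4-4 : ℝ) = 2*e by ring]; field_simp; ring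
    have hp2 : (e/4) * (((N:ℝ)+4)/((N:ℝ)-4)) = e/4 + 1 := by
      rw [hNe, show (2*e+4-4 : ℝ) = 2*e by ring]; field_simp; ring
    have hp3 : e * (((N:ℝ)+4)/((N:ℝ)-4)) = e + 4 := by
      rw [hNe, show (2*e+4-4 : ℝ) = 2*e by ring]; field_simp; ring
    rw [← Real.rpow_mul hs.le, hp1, hK,
      Real.mul_rpow (Real.rpow_pos_of_pos hM0 _).le (Real.rpow_pos_of_pos hε _).le,
      ← Real.rpow_mul hM0.le, ← Real.rpow_mul hε.le, hp2, hp3,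
      Real.rpow_add hM0, Real.rpow_add hε, Real.rpow_one, hε4]
    linear_combination (M^(e/4)*ε^e*ε^4*(ε^2+‖x‖^2)^(-e-4)) * hMe
  rw [hL, hR]
end

section
/- Let Ω ⊂ ℝ^N (N ≥ 5) be bounded smooth, μ < 0, λ ∈ ℝ, λ₁(Ω) the first Dirichlet eigenvalue of Δ² with eigenfunction φ₁ > 0, and suppose −μ(N−4)/4 + (μ(N−4)/4) ln(−μ(N−4)/4) + λ − λ₁(Ω) ≥ 0. Then there is no positive solution u₀ ∈ H₀²(Ω) of Δ²u₀ = λu₀ + μ u₀ ln u₀² + u₀^{2**−1} with u = ∂u/∂ν = 0 on ∂Ω. -/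
open MeasureTheory Set Filter Topology Metric

/-- If `G` is Lipschitz with compact support and `g` is a.e. a derivative of `G`,
then `∫ g = 0`. -/
lemma lip_integral_deriv_zero {G g : ℝ → ℝ} {C : NNReal} {a b : ℝ}
    (lip : LipschitzWith C G) (supp : ∀ x, x ∉ Set.Icc a b → G x = 0)
    (hg : ∀ᵐ t, HasDerivAt G (g t) t) : ∫ t, g t = 0 := by
  set F : ℕ → ℝ → ℝ := fun n t => (n + 1 : ℝ) * (G (t + 1 / (n + 1)) - G t) with hF
  have hGc : Continuous G := lip.continuous
  have hGint : Integrable G :=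
    hGc.integrable_of_hasCompactSupport (HasCompactSupport.intro isCompact_Icc supp)
  have hδpos : ∀ n : ℕ, (0:ℝ) < 1 / (n + 1) := fun n => by positivity
  have hδle : ∀ n : ℕ, (1:ℝ) / (n + 1) ≤ 1 := fun n => by
    rw [div_le_one (by positivity)]; linarith [Nat.cast_nonneg (α := ℝ) n]
  have hFint : ∀ n, ∫ t, F n t = 0 := by
    intro n
    have h1 : Integrable (fun t => G (t + 1 / (n + 1))) := hGint.comp_add_right _
    rw [hF]
    simp only
    rw [integral_const_mul, integral_sub h1 hGint,
      integral_add_right_eq_self G (1 / ((n:ℝ) + 1)), sub_self, mul_zero]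
  have hlim : ∀ᵐ t, Tendsto (fun n => F n t) atTop (𝓝 (g t)) := by
    filter_upwards [hg] with t ht
    have h1 : Tendsto (fun n : ℕ => t + 1 / (n + 1)) atTop (𝓝[≠] t) := by
      rw [tendsto_nhdsWithin_iff]
      constructor
      · have := tendsto_one_div_add_atTop_nhds_zero_nat (𝕜 := ℝ)
        have := (tendsto_const_nhds (x := t) (f := atTop (α := ℕ))).add this
        simpa using this
      · filter_upwards with n
        simp only [mem_compl_iff, mem_singleton_iff]
        intro h
        nlinarith [hδpos n, (add_eq_left (a := t)).1 h]
    have h2 := (hasDerivAt_iff_tendsto_slope.1 ht).comp h1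
    convert h2 using 2 with n
    have hδ : (t + 1/((n:ℝ)+1)) - t = 1/((n:ℝ)+1) := add_sub_cancel_left t _
    simp only [Function.comp_apply, slope_def_field, hδ]
    rw [div_div_eq_mul_div, div_one, mul_comm]
  have hbound : ∀ n, ∀ᵐ t, ‖F n t‖ ≤ (Icc (a - 1) b).indicator (fun _ => (C:ℝ)) t := by
    intro n
    filter_upwards with t
    by_cases ht : t ∈ Icc (a - 1) b
    · rw [indicator_of_mem ht]
      have := lip.dist_le_mul (t + 1 / (n + 1)) t
      rw [Real.dist_eq, Real.dist_eq] at this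
      have h1 : |t + 1 / (n + 1) - t| = 1 / (n + 1) := by
        rw [add_sub_cancel_left, abs_of_pos (hδpos n)]
      rw [h1] at this
      have hn : (0:ℝ) < n + 1 := by positivity
      calc ‖F n t‖ = (n + 1 : ℝ) * |G (t + 1 / (n + 1)) - G t| := by
            rw [hF]; simp [abs_mul, abs_of_pos hn]
        _ ≤ (n + 1 : ℝ) * ((C:ℝ) * (1 / (n + 1))) := by
            apply mul_le_mul_of_nonneg_left this hn.le
        _ = (C:ℝ) := by field_simp
    · rw [indicator_of_notMem ht]
      have h0 : F n t = 0 := by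
        rw [hF]; simp only
        rw [mem_Icc, not_and_or, not_le, not_le] at ht
        rcases ht with ht | ht
        · rw [supp t (by rw [mem_Icc]; push_neg; intro h; linarith),
            supp (t + 1 / (n + 1)) (by rw [mem_Icc]; push_neg; intro h; nlinarith [hδle n])]
          ring
        · rw [supp t (by rw [mem_Icc]; push_neg; intro h; linarith),
            supp (t + 1 / (n + 1)) (by rw [mem_Icc]; push_neg; intro h; nlinarith [hδpos n])]
          ring
      rw [h0, norm_zero]
  have hmeas : ∀ n, AEStronglyMeasurable (F n) volume := by
    intro n
    exact (continuous_const.mul ((hGc.comp (continuous_id.add continuous_const)).sub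
      hGc)).aestronglyMeasurable
  have hbi : Integrable ((Icc (a - 1) b).indicator (fun _ => (C:ℝ))) := by
    rw [integrable_indicator_iff measurableSet_Icc]
    exact integrableOn_const measure_Icc_lt_top.ne
  have := tendsto_integral_of_dominated_convergence _ hmeas hbi hbound hlim
  simp only [hFint] at this
  exact (tendsto_nhds_unique tendsto_const_nhds this).symm

lemma oneD_green {s : Set ℝ} (hso : IsOpen s) (hsb : Bornology.IsBounded s) {h : ℝ → ℝ}
    (hh : ContDiff ℝ 1 h) (hfr : ∀ t ∈ frontier s, h t = 0) :
    ∫ t in s, deriv h t = 0 := by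
  obtain ⟨r, hr⟩ := hsb.subset_closedBall 0
  set R : ℝ := |r| + 1 with hR
  have hsR : s ⊆ Icc (-R) R := by
    intro x hx
    have := hr hx
    rw [Real.closedBall_eq_Icc] at this
    rw [mem_Icc] at this ⊢
    have h1 : r ≤ |r| := le_abs_self r
    constructor <;> [linarith [this.1]; linarith [this.2]]
  have hclR : closure s ⊆ Icc (-R) R := closure_minimal hsR isClosed_Icc
  have hd : Differentiable ℝ h := hh.differentiable one_ne_zero
  -- bound on deriv
  obtain ⟨C₀, hC₀⟩ := isCompact_Icc.exists_bound_of_continuousOn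
    ((hh.continuous_deriv le_rfl).continuousOn (s := Icc (-R) R))
  set L : ℝ := max C₀ 0 with hLdef
  have hL0 : 0 ≤ L := le_max_right _ _
  have hL : ∀ x ∈ Icc (-R) R, ‖deriv h x‖ ≤ L := fun x hx => (hC₀ x hx).trans (le_max_left _ _)
  have key : ∀ x ∈ Icc (-R) R, ∀ y ∈ Icc (-R) R, |h y - h x| ≤ L * |y - x| := by
    intro x hx y hy
    have := Convex.norm_image_sub_le_of_norm_deriv_le
      (f := h) (fun z _ => hd.differentiableAt) hL (convex_Icc _ _) hx hy
    simpa using this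
  set G : ℝ → ℝ := s.indicator h with hG
  -- crossing estimate
  have hcross : ∀ t t', t ∈ s → |G t - G t'| ≤ L * |t - t'| := by
    intro t t' ht
    by_cases ht' : t' ∈ s
    · rw [hG, indicator_of_mem ht, indicator_of_mem ht']
      exact key t' (hsR ht') t (hsR ht)
    · set K : Set ℝ := sᶜ ∩ uIcc t t' with hK
      have hKc : IsCompact K := isCompact_uIcc.inter_left hso.isClosed_compl
      have hKne : K.Nonempty := ⟨t', ht', right_mem_uIcc⟩
      obtain ⟨τ, hτK, hτd⟩ := hKc.exists_infDist_eq_dist hKne t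
      have hdle : dist t τ ≤ dist t t' := hτd ▸ infDist_le_dist_of_mem ⟨ht', right_mem_uIcc⟩
      have hτt : τ ≠ t := fun hE => hτK.1 (hE ▸ ht)
      have hIoo : Ioo (min t τ) (max t τ) ⊆ s := by
        intro z hz
        by_contra hzs
        have hzK : z ∈ K := by
          refine ⟨hzs, ?_⟩
          have h1 : uIcc t τ ⊆ uIcc t t' := uIcc_subset_uIcc left_mem_uIcc hτK.2
          exact h1 (Ioo_subset_Icc_self hz)
        have hlt : dist t z < dist t τ := by
          rw [Real.dist_eq, Real.dist_eq]
          rcases le_total t τ with hc | hc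
          · rw [min_eq_left hc, max_eq_right hc] at hz
            rw [abs_sub_comm, abs_of_nonneg (by linarith [hz.1]), abs_sub_comm t τ,
              abs_of_nonneg (by linarith)]
            linarith [hz.2]
          · rw [min_eq_right hc, max_eq_left hc] at hz
            rw [abs_of_nonneg (by linarith [hz.2]), abs_of_nonneg (by linarith)]
            linarith [hz.1]
        have h2 := infDist_le_dist_of_mem (x := t) hzK
        rw [hτd] at h2
        linarith
      have hmm : min t τ < max t τ := by
        rcases hτt.lt_or_gt with hc | hc
        · rw [min_eq_right hc.le, max_eq_left hc.le]; exact hc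
        · rw [min_eq_left hc.le, max_eq_right hc.le]; exact hc
      have hτcl : τ ∈ closure s := by
        apply closure_mono hIoo
        rw [closure_Ioo hmm.ne]
        rcases hτt.lt_or_gt with hc | hc
        · exact ⟨by rw [min_eq_right hc.le], by rw [max_eq_left hc.le]; linarith [hmm]⟩
        · exact ⟨by rw [min_eq_left hc.le]; linarith [hmm], by rw [max_eq_right hc.le]⟩
      have hτ0 : h τ = 0 := hfr τ (by rw [hso.frontier_eq]; exact ⟨hτcl, hτK.1⟩)
      rw [hG, indicator_of_mem ht, indicator_of_notMem ht']
      have h1 : |h t - 0| ≤ L * |t - τ| := by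
        have := key τ (hclR hτcl) t (hsR ht)
        rwa [hτ0] at this
      rw [sub_zero] at h1 ⊢
      refine h1.trans (mul_le_mul_of_nonneg_left ?_ hL0)
      rw [← Real.dist_eq, ← Real.dist_eq]
      exact hdle
  have lip : LipschitzWith (Real.toNNReal L) G := by
    apply LipschitzWith.of_dist_le_mul
    intro t t'
    rw [Real.dist_eq, Real.dist_eq, Real.coe_toNNReal L hL0]
    by_cases ht : t ∈ s
    · exact hcross t t' ht
    · by_cases ht' : t' ∈ s
      · rw [abs_sub_comm, abs_sub_comm t t']
        exact hcross t' t ht'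
      · rw [hG, indicator_of_notMem ht, indicator_of_notMem ht', sub_self, abs_zero]
        positivity
  -- countable bad set
  set B : Set ℝ := {t | t ∉ s ∧ t ∉ closure (sᶜ \ {t})} with hB
  have hBprop : ∀ t ∈ B, ∃ p q : ℚ, (p:ℝ) < t ∧ t < q ∧ Ioo (p:ℝ) q \ {t} ⊆ s := by
    intro t ht
    have h1 : ∃ ε > 0, ∀ z ∈ sᶜ \ {t}, ¬ dist t z < ε := by
      by_contra hc
      push_neg at hc
      exact ht.2 (Metric.mem_closure_iff.2 (fun ε hε => by
        obtain ⟨z, hz1, hz2⟩ := hc ε hε; exact ⟨z, hz1, hz2⟩))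
    obtain ⟨ε, hε, hεp⟩ := h1
    obtain ⟨p, hp1, hp2⟩ := exists_rat_btwn (show t - ε < t by linarith)
    obtain ⟨q, hq1, hq2⟩ := exists_rat_btwn (show t < t + ε by linarith)
    refine ⟨p, q, hp2, hq1, ?_⟩
    rintro z ⟨hz1, hz2⟩
    by_contra hzs
    apply hεp z ⟨hzs, hz2⟩
    rw [Real.dist_eq, abs_sub_lt_iff]
    rw [mem_Ioo] at hz1
    constructor <;> [linarith [hz1.1]; linarith [hz1.2]]
  have hBc : B.Countable := by
    choose! p q hp hq hsub using hBprop
    have hinj : InjOn (fun t => (p t, q t)) B := by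
      intro t1 h1 t2 h2 he
      by_contra hne
      simp only [Prod.mk.injEq] at he
      have : t2 ∈ Ioo ((p t1 : ℝ)) (q t1) \ {t1} := by
        refine ⟨?_, by simpa using (Ne.symm hne)⟩
        rw [he.1, he.2]
        exact ⟨hp t2 h2, hq t2 h2⟩
      exact h2.1 (hsub t1 h1 this)
    have : Countable ↑B := hinj.injective.countable
    exact Set.countable_coe_iff.mp this
  have hBnull : ∀ᵐ t : ℝ, t ∉ B := by
    have := hBc.measure_zero (volume : Measure ℝ)
    exact MeasureTheory.compl_mem_ae_iff.2 this
  have hae : ∀ᵐ t : ℝ, HasDerivAt G (s.indicator (deriv h) t) t := by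
    filter_upwards [lip.ae_differentiableAt_real, hBnull] with t hdiff hBt
    by_cases hts : t ∈ s
    · rw [indicator_of_mem hts]
      have heq : G =ᶠ[nhds t] h := by
        filter_upwards [hso.mem_nhds hts] with y hy
        exact indicator_of_mem hy h
      exact (hd.differentiableAt.hasDerivAt).congr_of_eventuallyEq heq
    · rw [indicator_of_notMem hts]
      have hcl : t ∈ closure (sᶜ \ {t}) := by
        by_contra hc
        exact hBt ⟨hts, hc⟩
      have hG0 : HasDerivAt G (deriv G t) t := hdiff.hasDerivAt
      have hz : deriv G t = 0 := by
        have h1 := hasDerivAt_iff_tendsto_slope.1 hG0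
        have hne : (nhdsWithin t (sᶜ \ {t})).NeBot := mem_closure_iff_nhdsWithin_neBot.1 hcl
        have h2 : Tendsto (slope G t) (nhdsWithin t (sᶜ \ {t})) (nhds (deriv G t)) :=
          h1.mono_left (nhdsWithin_mono t (fun z hz => hz.2))
        have h3 : Tendsto (slope G t) (nhdsWithin t (sᶜ \ {t})) (nhds 0) := by
          apply Tendsto.congr' _ tendsto_const_nhds
          filter_upwards [self_mem_nhdsWithin] with z hz
          rw [slope_def_field, hG, indicator_of_notMem hz.1, indicator_of_notMem hts]
          simp
        exact tendsto_nhds_unique h2 h3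
      rw [← hz]
      exact hG0
  have hsupp : ∀ x, x ∉ Icc (-R) R → G x = 0 := by
    intro x hx
    rw [hG, indicator_of_notMem (fun hxs => hx (hsR hxs))]
  have := lip_integral_deriv_zero lip hsupp hae
  rwa [integral_indicator hso.measurableSet] at this

noncomputable def pd {N : ℕ} (i : Fin N) (f : EuclideanSpace ℝ (Fin N) → ℝ)
    (x : EuclideanSpace ℝ (Fin N)) : ℝ :=
  fderiv ℝ f x (EuclideanSpace.single i 1)

lemma lap_eq {N : ℕ} (f : EuclideanSpace ℝ (Fin N) → ℝ) (x : EuclideanSpace ℝ (Fin N)) :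
    lap f x = ∑ i : Fin N, pd i (pd i f) x := rfl

lemma pd_contDiff {N : ℕ} (i : Fin N) {f : EuclideanSpace ℝ (Fin N) → ℝ} {n m : ℕ}
    (hm : m + 1 ≤ n) (h : ContDiff ℝ n f) : ContDiff ℝ m (pd i f) := by
  have h1 : ContDiff ℝ m (fderiv ℝ f) := h.fderiv_right (by exact_mod_cast hm)
  exact h1.clm_apply contDiff_const

lemma lap_contDiff {N : ℕ} {f : EuclideanSpace ℝ (Fin N) → ℝ} {n m : ℕ}
    (hm : m + 2 ≤ n) (h : ContDiff ℝ n f) : ContDiff ℝ m (lap f) := by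
  have : ContDiff ℝ m fun x => ∑ i : Fin N, pd i (pd i f) x :=
    ContDiff.sum fun i _ => pd_contDiff i (le_refl _) (pd_contDiff i (by omega) h)
  exact this

lemma pd_mul {N : ℕ} (i : Fin N) {f g : EuclideanSpace ℝ (Fin N) → ℝ}
    {x : EuclideanSpace ℝ (Fin N)}
    (hf : DifferentiableAt ℝ f x) (hg : DifferentiableAt ℝ g x) :
    pd i (fun y => f y * g y) x = f x * pd i g x + g x * pd i f x := by
  unfold pd
  rw [fderiv_fun_mul hf hg]
  simp [ContinuousLinearMap.add_apply, ContinuousLinearMap.smul_apply, smul_eq_mul]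

lemma pd_add {N : ℕ} (i : Fin N) {f g : EuclideanSpace ℝ (Fin N) → ℝ}
    {x : EuclideanSpace ℝ (Fin N)}
    (hf : DifferentiableAt ℝ f x) (hg : DifferentiableAt ℝ g x) :
    pd i (fun y => f y + g y) x = pd i f x + pd i g x := by
  unfold pd
  rw [fderiv_fun_add hf hg]
  simp

lemma pd_sub {N : ℕ} (i : Fin N) {f g : EuclideanSpace ℝ (Fin N) → ℝ}
    {x : EuclideanSpace ℝ (Fin N)}
    (hf : DifferentiableAt ℝ f x) (hg : DifferentiableAt ℝ g x) :
    pd i (fun y => f y - g y) x = pd i f x - pd i g x := by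
  unfold pd
  rw [fderiv_fun_sub hf hg]
  simp

/-- The vector field used in the Green/Rellich identity. -/
noncomputable def Wfield {N : ℕ} (φ u : EuclideanSpace ℝ (Fin N) → ℝ) (i : Fin N)
    (x : EuclideanSpace ℝ (Fin N)) : ℝ :=
  φ x * pd i (lap u) x - lap u x * pd i φ x + lap φ x * pd i u x - u x * pd i (lap φ) x

lemma Wfield_contDiff {N : ℕ} {φ u : EuclideanSpace ℝ (Fin N) → ℝ}
    (hφ : ContDiff ℝ 4 φ) (hu : ContDiff ℝ 4 u) (i : Fin N) :
    ContDiff ℝ 1 (Wfield φ u i) := by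
  have h4 : (4 : ℕ) = 4 := rfl
  have hφ1 : ContDiff ℝ 1 φ := hφ.of_le (by norm_num)
  have hu1 : ContDiff ℝ 1 u := hu.of_le (by norm_num)
  have h1 : ContDiff ℝ 1 (pd i (lap u)) := pd_contDiff i (le_refl _) (lap_contDiff (by norm_num) hu)
  have h2 : ContDiff ℝ 1 (lap u) := lap_contDiff (by norm_num) hu
  have h3 : ContDiff ℝ 1 (pd i φ) := (pd_contDiff i (n := 4) (m := 3) (by norm_num) hφ).of_le (by norm_num)
  have h5 : ContDiff ℝ 1 (lap φ) := lap_contDiff (by norm_num) hφ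
  have h6 : ContDiff ℝ 1 (pd i u) := (pd_contDiff i (n := 4) (m := 3) (by norm_num) hu).of_le (by norm_num)
  have h7 : ContDiff ℝ 1 (pd i (lap φ)) := pd_contDiff i (le_refl _) (lap_contDiff (by norm_num) hφ)
  exact (((hφ1.mul h1).sub (h2.mul h3)).add (h5.mul h6)).sub (hu1.mul h7)

lemma Wfield_divergence {N : ℕ} {φ u : EuclideanSpace ℝ (Fin N) → ℝ}
    (hφ : ContDiff ℝ 4 φ) (hu : ContDiff ℝ 4 u) (x : EuclideanSpace ℝ (Fin N)) :
    ∑ i : Fin N, pd i (Wfield φ u i) x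
      = φ x * lap (lap u) x - u x * lap (lap φ) x := by
  have hφd : Differentiable ℝ φ := hφ.differentiable (by norm_num)
  have hud : Differentiable ℝ u := hu.differentiable (by norm_num)
  have hlapud : Differentiable ℝ (lap u) := (lap_contDiff (n := 4) (m := 1) (by norm_num) hu).differentiable (by norm_num)
  have hlapφd : Differentiable ℝ (lap φ) := (lap_contDiff (n := 4) (m := 1) (by norm_num) hφ).differentiable (by norm_num)
  have key : ∀ i : Fin N, pd i (Wfield φ u i) x
      = (φ x * pd i (pd i (lap u)) x - lap u x * pd i (pd i φ) x)
        + (lap φ x * pd i (pd i u) x - u x * pd i (pd i (lap φ)) x) := by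
    intro i
    have hpdlapu : Differentiable ℝ (pd i (lap u)) :=
      (pd_contDiff i (n := 2) (m := 1) (by norm_num) (lap_contDiff (by norm_num) hu)).differentiable (by norm_num)
    have hpdφ : Differentiable ℝ (pd i φ) :=
      (pd_contDiff i (n := 4) (m := 3) (by norm_num) hφ).differentiable (by norm_num)
    have hpdu : Differentiable ℝ (pd i u) :=
      (pd_contDiff i (n := 4) (m := 3) (by norm_num) hu).differentiable (by norm_num)
    have hpdlapφ : Differentiable ℝ (pd i (lap φ)) :=
      (pd_contDiff i (n := 2) (m := 1) (by norm_num) (lap_contDiff (by norm_num) hφ)).differentiable (by norm_num)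
    have e1 : Wfield φ u i = fun y =>
        (φ y * pd i (lap u) y - lap u y * pd i φ y + lap φ y * pd i u y) - u y * pd i (lap φ) y := rfl
    rw [e1, pd_sub i (f := fun y => φ y * pd i (lap u) y - lap u y * pd i φ y + lap φ y * pd i u y)
        (g := fun y => u y * pd i (lap φ) y) (by
        exact (((hφd.mul hpdlapu).sub (hlapud.mul hpdφ)).add (hlapφd.mul hpdu)).differentiableAt)
      ((hud.mul hpdlapφ).differentiableAt)]
    have e2 : (fun y => φ y * pd i (lap u) y - lap u y * pd i φ y + lap φ y * pd i u y)
        = fun y => (φ y * pd i (lap u) y - lap u y * pd i φ y) + lap φ y * pd i u y := rfl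
    rw [e2, pd_add i (f := fun y => φ y * pd i (lap u) y - lap u y * pd i φ y)
        (g := fun y => lap φ y * pd i u y) (by
        exact ((hφd.mul hpdlapu).sub (hlapud.mul hpdφ)).differentiableAt)
      ((hlapφd.mul hpdu).differentiableAt)]
    rw [pd_sub i (f := fun y => φ y * pd i (lap u) y) (g := fun y => lap u y * pd i φ y)
      ((hφd.mul hpdlapu).differentiableAt) ((hlapud.mul hpdφ).differentiableAt)]
    rw [pd_mul i (hφd.differentiableAt) (hpdlapu.differentiableAt)]
    rw [pd_mul i (hlapud.differentiableAt) (hpdφ.differentiableAt)]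
    rw [pd_mul i (hlapφd.differentiableAt) (hpdu.differentiableAt)]
    rw [pd_mul i (hud.differentiableAt) (hpdlapφ.differentiableAt)]
    ring
  rw [Finset.sum_congr rfl (fun i _ => key i)]
  rw [Finset.sum_add_distrib, Finset.sum_sub_distrib, Finset.sum_sub_distrib]
  rw [← Finset.mul_sum, ← Finset.mul_sum, ← Finset.mul_sum, ← Finset.mul_sum]
  rw [lap_eq (lap u) x, lap_eq (lap φ) x, lap_eq u x, lap_eq φ x]
  ring

lemma green {n : ℕ} (Ω : Set (EuclideanSpace ℝ (Fin (n+1)))) (hΩo : IsOpen Ω)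
    (hΩb : Bornology.IsBounded Ω)
    (w : EuclideanSpace ℝ (Fin (n+1)) → ℝ) (hw : ContDiff ℝ 1 w)
    (hfr : ∀ x ∈ frontier Ω, w x = 0) (i : Fin (n+1)) :
    ∫ x in Ω, fderiv ℝ w x (EuclideanSpace.single i 1) = 0 := by
  set v : EuclideanSpace ℝ (Fin (n+1)) := EuclideanSpace.single i 1 with hv
  set g : EuclideanSpace ℝ (Fin (n+1)) → ℝ := fun x => fderiv ℝ w x v with hg
  have hgc : Continuous g := by
    have h1 : ContDiff ℝ 0 (fderiv ℝ w) := hw.fderiv_right (by norm_num)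
    exact (h1.clm_apply contDiff_const).continuous
  set F : EuclideanSpace ℝ (Fin (n+1)) → ℝ := Ω.indicator g with hF
  have hK : IsCompact (closure Ω) :=
    Metric.isCompact_of_isClosed_isBounded isClosed_closure hΩb.closure
  have hFint : Integrable F := by
    rw [hF, integrable_indicator_iff hΩo.measurableSet]
    exact (hgc.continuousOn.integrableOn_compact hK).mono_set subset_closure
  -- transfer to pi space
  set ι := (MeasurableEquiv.toLp 2 (Fin (n+1) → ℝ)).symm with hι
  have hιmp := (EuclideanSpace.volume_preserving_symm_measurableEquiv_toLp (Fin (n+1))).symm ι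
  set e := MeasurableEquiv.piFinSuccAbove (fun _ : Fin (n+1) => ℝ) i with he
  have hemp := (measurePreserving_piFinSuccAbove (fun _ : Fin (n+1) => volume) i).symm e
  have hstep1 : ∫ x, F x = ∫ y : Fin (n+1) → ℝ, F (ι.symm y) := by
    rw [hιmp.integral_comp ι.symm.measurableEmbedding F]
  have hFint2 : Integrable (fun y : Fin (n+1) → ℝ => F (ι.symm y)) volume := by
    exact ((hιmp.integrable_comp_emb ι.symm.measurableEmbedding).2 hFint : _)
  have hstep2 : ∫ y : Fin (n+1) → ℝ, F (ι.symm y)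
      = ∫ z : ℝ × (Fin n → ℝ), F (ι.symm (e.symm z))
          ∂((volume : Measure ℝ).prod (Measure.pi fun _ => volume)) := by
    rw [hemp.integral_comp e.symm.measurableEmbedding (fun y => F (ι.symm y))]
    rw [volume_pi]
  have hFint3 : Integrable (fun z : ℝ × (Fin n → ℝ) => F (ι.symm (e.symm z)))
      ((volume : Measure ℝ).prod (Measure.pi fun _ => volume)) := by
    have h1 : Integrable (fun y => F (ι.symm y)) (Measure.pi fun _ : Fin (n+1) => volume) := by
      rw [← volume_pi]; exact hFint2
    exact ((hemp.integrable_comp_emb e.symm.measurableEmbedding).2 h1 : _)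
  -- pointwise description of the slices
  have hψ : ∀ (t : ℝ) (y : Fin n → ℝ),
      ι.symm (e.symm (t, y)) = ι.symm (e.symm (0, y)) + t • v := by
    intro t y
    ext j
    refine Fin.succAboveCases i ?_ ?_ j
    · simp [he, hι, hv, EuclideanSpace.single_apply,
        MeasurableEquiv.coe_toLp, MeasurableEquiv.piFinSuccAbove_symm_apply,
        Fin.insertNthEquiv, Equiv.coe_fn_mk]
    · intro j'
      simp [he, hι, hv, EuclideanSpace.single_apply, Fin.succAbove_ne i j',
        MeasurableEquiv.coe_toLp, MeasurableEquiv.piFinSuccAbove_symm_apply,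
        Fin.insertNthEquiv, Equiv.coe_fn_mk]
  have hinner : ∀ y : Fin n → ℝ, ∫ t : ℝ, F (ι.symm (e.symm (t, y))) = 0 := by
    intro y
    set c : EuclideanSpace ℝ (Fin (n+1)) := ι.symm (e.symm (0, y)) with hc
    set ψ : ℝ → EuclideanSpace ℝ (Fin (n+1)) := fun t => c + t • v with hψdef
    have hψeq : ∀ t, ι.symm (e.symm (t, y)) = ψ t := fun t => hψ t y
    have hψd : ∀ t, HasDerivAt ψ v t := by
      intro t
      have h1 : HasDerivAt (fun t : ℝ => t • v) ((1:ℝ) • v) t := (hasDerivAt_id t).smul_const v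
      rw [one_smul] at h1
      exact h1.const_add c
    have hψcd : ContDiff ℝ 1 ψ := contDiff_const.add (contDiff_id.smul contDiff_const)
    have hψcont : Continuous ψ := hψcd.continuous
    set s : Set ℝ := ψ ⁻¹' Ω with hs
    have hso : IsOpen s := hΩo.preimage hψcont
    have hsb : Bornology.IsBounded s := by
      obtain ⟨M, hM⟩ := isBounded_iff_forall_norm_le.1 hΩb
      rw [isBounded_iff_forall_norm_le]
      refine ⟨M + ‖c‖, fun t ht => ?_⟩
      have h1 : ‖ψ t‖ ≤ M := hM _ ht
      have h2 : ‖t • v‖ = |t| := by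
        rw [norm_smul, hv, EuclideanSpace.norm_single]
        simp
      have h3 : ‖t • v‖ ≤ ‖ψ t‖ + ‖c‖ := by
        have : t • v = ψ t - c := by rw [hψdef]; simp
        rw [this]
        exact norm_sub_le _ _
      rw [Real.norm_eq_abs]
      linarith [h2 ▸ h3]
    have hcomp : ContDiff ℝ 1 (w ∘ ψ) := hw.comp hψcd
    have hderiv : ∀ t, deriv (w ∘ ψ) t = g (ψ t) := by
      intro t
      have h1 : HasDerivAt (w ∘ ψ) (fderiv ℝ w (ψ t) v) t :=
        ((hw.differentiable one_ne_zero) (ψ t)).hasFDerivAt.comp_hasDerivAt t (hψd t)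
      exact h1.deriv
    have hbc : ∀ t ∈ frontier s, (w ∘ ψ) t = 0 := by
      intro t ht
      have h1 : ψ t ∈ frontier Ω := hψcont.frontier_preimage_subset Ω ht
      exact hfr _ h1
    have h0 := oneD_green hso hsb hcomp hbc
    calc ∫ t : ℝ, F (ι.symm (e.symm (t, y)))
        = ∫ t : ℝ, s.indicator (fun t => deriv (w ∘ ψ) t) t := by
          congr 1
          funext t
          rw [hψeq t, hF, ← Set.indicator_comp_right ψ (s := Ω) (g := g) (x := t)]
          by_cases hts : t ∈ s
          · rw [indicator_of_mem hts, indicator_of_mem hts, Function.comp_apply, hderiv]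
          · rw [indicator_of_notMem hts, indicator_of_notMem hts]
      _ = ∫ t in s, deriv (w ∘ ψ) t := integral_indicator hso.measurableSet
      _ = 0 := h0
  -- put it together
  have hswap : ∫ z : ℝ × (Fin n → ℝ), F (ι.symm (e.symm z))
      ∂((volume : Measure ℝ).prod (Measure.pi fun _ => volume)) = 0 := by
    rw [integral_prod _ hFint3]
    have h1 : ∀ t : ℝ, ∀ y : Fin n → ℝ, F (ι.symm (e.symm (t, y))) =
        (fun (t : ℝ) (y : Fin n → ℝ) => F (ι.symm (e.symm (t, y)))) t y := fun _ _ => rfl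
    rw [integral_integral_swap hFint3]
    simp only [hinner]
    simp
  rw [← integral_indicator hΩo.measurableSet]
  rw [show Ω.indicator (fun x => fderiv ℝ w x (EuclideanSpace.single i 1)) = F from rfl]
  rw [hstep1, hstep2, hswap]

lemma keyIneq {mu q a lam lam1 : ℝ} (hmu : mu < 0) (hq : 0 < q)
    (ha : a = -2 * mu / q) (hcond : 0 ≤ a - a * Real.log a + lam - lam1) {t : ℝ} (ht : 0 < t) :
    0 ≤ lam - lam1 + mu * Real.log (t ^ 2) + t ^ q ∧
    (lam - lam1 + mu * Real.log (t ^ 2) + t ^ q = 0 → t ^ q = a) := by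
  have ha0 : 0 < a := by
    rw [ha]; apply div_pos (by linarith) hq
  set s : ℝ := t ^ q with hs
  have hs0 : 0 < s := Real.rpow_pos_of_pos ht q
  have hlog2 : Real.log (t ^ 2) = 2 * Real.log t := by
    rw [Real.log_pow]; push_cast; ring
  have hlogs : Real.log s = q * Real.log t := Real.log_rpow ht q
  have hmu_eq : mu = -a * q / 2 := by rw [ha]; field_simp
  have key1 : mu * Real.log (t ^ 2) = -a * Real.log s := by
    rw [hmu_eq, hlog2, hlogs]; field_simp
  have hlogdiv : Real.log (s / a) = Real.log s - Real.log a := Real.log_div hs0.ne' ha0.ne'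
  have hsa : a * (s / a) = s := by field_simp
  have hle : Real.log (s / a) ≤ s / a - 1 := Real.log_le_sub_one_of_pos (by positivity)
  have hmul := mul_le_mul_of_nonneg_left hle ha0.le
  -- a * log s - a * log a ≤ s - a
  have hmain : a * Real.log s - a * Real.log a ≤ s - a := by
    rw [hlogdiv] at hmul
    nlinarith [hsa]
  constructor
  · rw [key1]; linarith
  · intro heq
    by_contra hne
    have hsane : s / a ≠ 1 := by
      intro hc
      exact hne (by field_simp at hc; linarith)
    have hlt : Real.log (s / a) < s / a - 1 := Real.log_lt_sub_one_of_pos (by positivity) hsane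
    have hmul2 := mul_lt_mul_of_pos_left hlt ha0
    rw [hlogdiv] at hmul2
    rw [key1] at heq
    nlinarith [hsa]





theorem stmt19 {N : ℕ} (hN : 5 ≤ N) (Ω : Set (EuclideanSpace ℝ (Fin N)))
    (hΩo : IsOpen Ω) (hΩb : Bornology.IsBounded Ω) (hΩne : Ω.Nonempty)
    (lam mu lam1 : ℝ) (hmu : mu < 0) (hlam1 : 0 < lam1)
    (φ : EuclideanSpace ℝ (Fin N) → ℝ) (hφsm : ContDiff ℝ 4 φ)
    (hφpos : ∀ x ∈ Ω, 0 < φ x)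
    (hφbc : ∀ x ∈ frontier Ω, φ x = 0 ∧ fderiv ℝ φ x = 0)
    (hφeig : ∀ x ∈ Ω, lap (lap φ) x = lam1 * φ x)
    (hcond : 0 ≤ -mu * ((N : ℝ) - 4) / 4
        + mu * ((N : ℝ) - 4) / 4 * Real.log (-mu * ((N : ℝ) - 4) / 4) + lam - lam1) :
    ¬ ∃ u : EuclideanSpace ℝ (Fin N) → ℝ, ContDiff ℝ 4 u
        ∧ (∀ x ∈ Ω, 0 < u x)
        ∧ (∀ x ∈ frontier Ω, u x = 0 ∧ fderiv ℝ u x = 0)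
        ∧ (∀ x ∈ Ω, lap (lap u) x
            = lam * u x + mu * u x * Real.log (u x ^ 2)
              + u x ^ (((N : ℝ) + 4) / ((N : ℝ) - 4))) := by
  rintro ⟨u, hu4, hupos, hubc, hueq⟩
  obtain ⟨n, rfl⟩ : ∃ n, N = n + 1 := ⟨N - 1, by omega⟩
  -- real-number abbreviations
  have hNr5 : (5 : ℝ) ≤ ((n + 1 : ℕ) : ℝ) := by exact_mod_cast hN
  set Nr : ℝ := ((n + 1 : ℕ) : ℝ) with hNrdef
  have hNr4 : 0 < Nr - 4 := by linarith
  set q : ℝ := 8 / (Nr - 4) with hqdef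
  have hq0 : 0 < q := by positivity
  set a : ℝ := -mu * (Nr - 4) / 4 with hadef
  have ha0 : 0 < a := by
    rw [hadef]
    have : 0 < -mu := by linarith
    positivity
  have ha : a = -2 * mu / q := by
    rw [hadef, hqdef]
    field_simp
    ring
  have hcond2 : 0 ≤ a - a * Real.log a + lam - lam1 := by
    have h1 : mu * (Nr - 4) / 4 = -a := by rw [hadef]; ring
    calc (0:ℝ) ≤ -mu * (Nr - 4) / 4
        + mu * (Nr - 4) / 4 * Real.log (-mu * (Nr - 4) / 4) + lam - lam1 := hcond
      _ = a - a * Real.log a + lam - lam1 := by rw [hadef]; ring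
  -- compact closure, integrability helper
  have hK : IsCompact (closure Ω) :=
    Metric.isCompact_of_isClosed_isBounded isClosed_closure hΩb.closure
  have hIntOn : ∀ f : EuclideanSpace ℝ (Fin (n+1)) → ℝ, Continuous f →
      IntegrableOn f Ω volume := fun f hf =>
    (hf.continuousOn.integrableOn_compact hK).mono_set subset_closure
  -- Green identities
  have hWfr : ∀ i : Fin (n+1), ∀ x ∈ frontier Ω, Wfield φ u i x = 0 := by
    intro i x hx
    obtain ⟨hφ0, hφ'⟩ := hφbc x hx
    obtain ⟨hu0, hu'⟩ := hubc x hx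
    simp [Wfield, pd, hφ0, hφ', hu0, hu']
  have hgreen : ∀ i : Fin (n+1), ∫ x in Ω, pd i (Wfield φ u i) x = 0 := fun i =>
    green Ω hΩo hΩb _ (Wfield_contDiff hφsm hu4 i) (hWfr i) i
  have hsum : ∫ x in Ω, (φ x * lap (lap u) x - u x * lap (lap φ) x) = 0 := by
    have hfun : ∀ x, φ x * lap (lap u) x - u x * lap (lap φ) x
        = ∑ i : Fin (n+1), pd i (Wfield φ u i) x :=
      fun x => (Wfield_divergence hφsm hu4 x).symm
    calc ∫ x in Ω, (φ x * lap (lap u) x - u x * lap (lap φ) x)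
        = ∫ x in Ω, ∑ i : Fin (n+1), pd i (Wfield φ u i) x := by simp only [hfun]
      _ = ∑ i : Fin (n+1), ∫ x in Ω, pd i (Wfield φ u i) x := by
          refine integral_finset_sum _ (fun i _ => hIntOn _ ?_)
          exact (pd_contDiff i (n := 1) (m := 0) le_rfl (Wfield_contDiff hφsm hu4 i)).continuous
      _ = 0 := by simp [hgreen]
  -- substitute the PDE and the eigenvalue equation
  set Q : EuclideanSpace ℝ (Fin (n+1)) → ℝ :=
    fun x => u x * φ x * (lam - lam1 + mu * Real.log (u x ^ 2) + u x ^ q) with hQdef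
  have hpde : ∀ x ∈ Ω, φ x * lap (lap u) x - u x * lap (lap φ) x = Q x := by
    intro x hx
    rw [hQdef]
    rw [hueq x hx, hφeig x hx]
    have hux : 0 < u x := hupos x hx
    have he : (Nr + 4) / (Nr - 4) = 1 + q := by
      rw [hqdef]; field_simp; ring
    have hsplit : u x ^ ((Nr + 4) / (Nr - 4)) = u x * u x ^ q := by
      rw [he, Real.rpow_add hux, Real.rpow_one]
    rw [hsplit]; ring
  have hQint0 : ∫ x in Ω, Q x = 0 := by
    rw [← setIntegral_congr_fun hΩo.measurableSet hpde]
    exact hsum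
  -- continuity of the left-hand side, integrability of Q
  have hlapcont : Continuous (fun x => φ x * lap (lap u) x - u x * lap (lap φ) x) := by
    have c1 : Continuous (lap (lap u)) := by
      have := lap_contDiff (n := 2) (m := 0) le_rfl (lap_contDiff (n := 4) (m := 2) le_rfl hu4)
      exact this.continuous
    have c2 : Continuous (lap (lap φ)) := by
      have := lap_contDiff (n := 2) (m := 0) le_rfl (lap_contDiff (n := 4) (m := 2) le_rfl hφsm)
      exact this.continuous
    exact ((hφsm.continuous.mul c1).sub (hu4.continuous.mul c2))
  have hQintOn : IntegrableOn Q Ω volume :=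
    (hIntOn _ hlapcont).congr_fun hpde hΩo.measurableSet
  have hQnn : ∀ x ∈ Ω, 0 ≤ Q x := by
    intro x hx
    exact mul_nonneg (mul_nonneg (hupos x hx).le (hφpos x hx).le)
      (keyIneq hmu hq0 ha hcond2 (hupos x hx)).1
  -- Q vanishes a.e. on Ω
  have hae0 : ∀ᵐ x ∂(volume.restrict Ω), Q x = 0 := by
    have h1 : 0 ≤ᵐ[volume.restrict Ω] Q :=
      (ae_restrict_iff' hΩo.measurableSet).2 (ae_of_all _ hQnn)
    exact (integral_eq_zero_iff_of_nonneg_ae h1 hQintOn).1 hQint0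
  -- Q vanishes everywhere on Ω
  have hzero : ∀ x ∈ Ω, Q x = 0 := by
    intro x₀ hx₀
    by_contra hne
    have hQpos : 0 < Q x₀ := lt_of_le_of_ne (hQnn x₀ hx₀) (Ne.symm hne)
    have hQcontAt : ContinuousAt Q x₀ := by
      have hu0 : u x₀ ≠ 0 := (hupos x₀ hx₀).ne'
      have c1 : ContinuousAt (fun x => Real.log (u x ^ 2)) x₀ :=
        ContinuousAt.log ((hu4.continuous.pow 2).continuousAt) (by positivity)
      have c2 : ContinuousAt (fun x => u x ^ q) x₀ :=
        ContinuousAt.rpow_const hu4.continuous.continuousAt (Or.inl hu0)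
      exact (hu4.continuous.continuousAt.mul hφsm.continuous.continuousAt).mul
        ((continuousAt_const.add (continuousAt_const.mul c1)).add c2)
    have hV : (Q ⁻¹' Ioi 0) ∩ Ω ∈ nhds x₀ :=
      Filter.inter_mem (hQcontAt.preimage_mem_nhds (Ioi_mem_nhds hQpos)) (hΩo.mem_nhds hx₀)
    obtain ⟨ε, hε, hball⟩ := Metric.mem_nhds_iff.1 hV
    have hnull : volume ({x | ¬ Q x = 0} ∩ Ω) = 0 := by
      have := ae_iff.1 hae0
      rwa [Measure.restrict_apply' hΩo.measurableSet] at this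
    have hsub : Metric.ball x₀ ε ⊆ {x | ¬ Q x = 0} ∩ Ω := by
      intro z hz
      obtain ⟨hz1, hz2⟩ := hball hz
      exact ⟨ne_of_gt hz1, hz2⟩
    have h1 : volume (Metric.ball x₀ ε) = 0 := measure_mono_null hsub hnull
    exact absurd h1 (Metric.measure_ball_pos volume x₀ hε).ne'
  -- u is constant on Ω
  have hconst : ∀ x ∈ Ω, u x = a ^ (1/q) := by
    intro x hx
    have hF : lam - lam1 + mu * Real.log (u x ^ 2) + u x ^ q = 0 := by
      have h := hzero x hx
      rw [hQdef] at h
      rcases mul_eq_zero.1 h with h1 | h2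
      · rcases mul_eq_zero.1 h1 with h3 | h4
        · exact absurd h3 (hupos x hx).ne'
        · exact absurd h4 (hφpos x hx).ne'
      · exact h2
    have hqa : u x ^ q = a := (keyIneq hmu hq0 ha hcond2 (hupos x hx)).2 hF
    have : (u x ^ q) ^ (1/q) = u x := by
      rw [← Real.rpow_mul (hupos x hx).le, mul_one_div, div_self hq0.ne', Real.rpow_one]
    rw [← this, hqa]
  -- the frontier is nonempty
  have hfrne : (frontier Ω).Nonempty := by
    by_contra h
    rw [Set.not_nonempty_iff_eq_empty] at h
    have hclopen : IsClopen Ω := isClopen_iff_frontier_eq_empty.2 h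
    have huniv : Ω = univ := (isClopen_iff.1 hclopen).resolve_left
      (Set.nonempty_iff_ne_empty.1 hΩne)
    obtain ⟨M, hM⟩ := isBounded_iff_forall_norm_le.1 hΩb
    have hM0 : (0:ℝ) ≤ M := le_trans (norm_nonneg _) (hM _ (huniv ▸ mem_univ 0))
    have h1 := hM (EuclideanSpace.single (0 : Fin (n+1)) (M+1)) (huniv ▸ mem_univ _)
    rw [EuclideanSpace.norm_single] at h1
    rw [Real.norm_eq_abs, abs_of_nonneg (by linarith)] at h1
    linarith
  obtain ⟨x₀, hx₀⟩ := hfrne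
  have hu0 : u x₀ = 0 := (hubc x₀ hx₀).1
  have hx₀cl : x₀ ∈ closure Ω := frontier_subset_closure hx₀
  have hNB : (nhdsWithin x₀ Ω).NeBot := mem_closure_iff_nhdsWithin_neBot.1 hx₀cl
  have h1 : Tendsto u (nhdsWithin x₀ Ω) (nhds (u x₀)) :=
    (hu4.continuous.tendsto x₀).mono_left nhdsWithin_le_nhds
  have h2 : Tendsto u (nhdsWithin x₀ Ω) (nhds (a ^ (1/q))) := by
    apply Tendsto.congr' _ tendsto_const_nhds
    filter_upwards [self_mem_nhdsWithin] with z hz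
    exact (hconst z hz).symm
  have h3 : u x₀ = a ^ (1/q) := tendsto_nhds_unique h1 h2
  have h4 : (0:ℝ) < a ^ (1/q) := Real.rpow_pos_of_pos ha0 _
  rw [hu0] at h3
  linarith [h3 ▸ h4]
end
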